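/- For all n ≥ 4, the number of permutations of {1,...,n} with an odd number of runs equals the number of permutations with an even number of runs; equivalently, the polynomial R_n(x) = Σ_k R(n,k) x^k is divisible by (x+1). -/

import Mathlib

open Finset

/-- The value of the permutation `p` at (0-indexed) position `i`, as a natural number. -/
def permVal (n : ℕ) (p : Equiv.Perm (Fin n)) (i : ℕ) : ℕ :=
  if h : i < n then (p ⟨i, h⟩ : ℕ) else 0

/-- `p` changes direction at 0-indexed interior position `i` (peak or valley). -/
def dirChange (n : ℕ) (p : Equiv.Perm (Fin n)) (i : ℕ) : Prop :=
  (permVal n p (i-1) < permVal n p i ∧ permVal n p (i+1) < permVal n p i) ∨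
  (permVal n p i < permVal n p (i-1) ∧ permVal n p i < permVal n p (i+1))

instance (n : ℕ) (p : Equiv.Perm (Fin n)) : DecidablePred (dirChange n p) := fun i => by
  unfold dirChange; infer_instance

/-- Number of runs of a permutation: one more than the number of interior direction changes. -/
def numRuns (n : ℕ) (p : Equiv.Perm (Fin n)) : ℕ :=
  ((Finset.Ico 1 (n-1)).filter (dirChange n p)).card + 1

/-- `R n k` is the number of permutations of `{1,...,n}` with exactly `k` runs. -/
def R (n k : ℕ) : ℕ :=
  (Finset.univ.filter (fun p : Equiv.Perm (Fin n) => numRuns n p = k)).card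

/-- Number of descents of a permutation. -/
def numDescents (n : ℕ) (p : Equiv.Perm (Fin n)) : ℕ :=
  ((Finset.range (n-1)).filter (fun i => permVal n p (i+1) < permVal n p i)).card

/-- `A n k`: Eulerian numbers, counting permutations with `k` descents. -/
def A (n k : ℕ) : ℕ :=
  (Finset.univ.filter (fun p : Equiv.Perm (Fin n) => numDescents n p = k)).card

/-- The run-generating polynomial `R_n(x) = Σ_k R(n,k) x^k`. -/
noncomputable def Rpoly (n : ℕ) : Polynomial ℤ :=
  ∑ k ∈ Finset.range n, Polynomial.C ((R n k : ℤ)) * Polynomial.X ^ k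

/-- `p` is `j`-half-ascending: `p_{n+1-2i} < p_{n+2-2i}` (1-indexed) for all `1 ≤ i ≤ j`. -/
def HalfAscJ (n j : ℕ) (p : Equiv.Perm (Fin n)) : Prop :=
  ∀ i ∈ Finset.Icc 1 j, permVal n p (n - 2*i) < permVal n p (n + 1 - 2*i)

instance (n j : ℕ) : DecidablePred (HalfAscJ n j) := fun p => by
  unfold HalfAscJ; infer_instance

/-- For `n` even: `p` is half-ascending if `p_{2i-1} < p_{2i}` (1-indexed) for `1 ≤ i ≤ n/2`. -/
def HalfAsc (n : ℕ) (p : Equiv.Perm (Fin n)) : Prop :=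
  ∀ i ∈ Finset.range (n/2), permVal n p (2*i) < permVal n p (2*i+1)

instance (n : ℕ) : DecidablePred (HalfAsc n) := fun p => by
  unfold HalfAsc; infer_instance

/-- `U n k`: number of half-ascending permutations with exactly `k` descents. -/
def U (n k : ℕ) : ℕ :=
  (Finset.univ.filter (fun p : Equiv.Perm (Fin n) =>
    HalfAsc n p ∧ numDescents n p = k)).card

/-- Number of runs of the prefix `p_1, ..., p_L` (1-indexed). -/
def prefixRuns (n L : ℕ) (p : Equiv.Perm (Fin n)) : ℕ :=
  ((Finset.Ico 1 (L-1)).filter (dirChange n p)).card + 1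

/-- Number of descents of the suffix starting at 0-indexed position `a`. -/
def suffixDescents (n a : ℕ) (p : Equiv.Perm (Fin n)) : ℕ :=
  ((Finset.Ico a (n-1)).filter (fun i => permVal n p (i+1) < permVal n p i)).card

/-- `t_j(p) = r_j(p) + s_j(p)`: runs of the prefix `p_1..p_{n-2j}` plus descents of the
suffix `p_{n-2j}..p_n`. -/
def tstat (n j : ℕ) (p : Equiv.Perm (Fin n)) : ℕ :=
  prefixRuns n (n - 2*j) p + suffixDescents n (n - 2*j - 1) p

/-- `R_{n,j}(x) = Σ_p x^{t_j(p)}` over `j`-half-ascending permutations `p`. -/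
noncomputable def RpolyJ (n j : ℕ) : Polynomial ℤ :=
  ∑ p ∈ Finset.univ.filter (HalfAscJ n j), Polynomial.X ^ (tstat n j p)

/-- A labeled northeastern lattice path with `n` edges, encoded as a function assigning to the
`i`-th edge (0-indexed; the paper's edge `a_{i+1}`) a direction (`true` = vertical) and a label.
Conditions (1)-(3) of the paper. -/
def IsLPath (n : ℕ) (f : Fin n → Bool × ℕ) : Prop :=
  (∀ i : Fin n, 1 ≤ (f i).2) ∧
  (∀ h : 0 < n, (f ⟨0, h⟩).1 = false ∧ (f ⟨0, h⟩).2 = 1) ∧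
  (∀ i : ℕ, (h : i + 1 < n) →
    ((f ⟨i, Nat.lt_of_succ_lt h⟩).1 = (f ⟨i+1, h⟩).1 →
      (f ⟨i+1, h⟩).2 ≤ (f ⟨i, Nat.lt_of_succ_lt h⟩).2) ∧
    ((f ⟨i, Nat.lt_of_succ_lt h⟩).1 ≠ (f ⟨i+1, h⟩).1 →
      (f ⟨i, Nat.lt_of_succ_lt h⟩).2 + (f ⟨i+1, h⟩).2 ≤ i + 2))

/-- The number of vertical edges of a labeled lattice path. -/
def vertCount (n : ℕ) (f : Fin n → Bool × ℕ) : ℕ :=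
  (Finset.univ.filter (fun i : Fin n => (f i).1 = true)).card

lemma permVal_eq (n : ℕ) (p : Equiv.Perm (Fin n)) {i : ℕ} (h : i < n) :
    permVal n p i = (p ⟨i, h⟩ : ℕ) := dif_pos h

lemma permVal_ne (n : ℕ) (p : Equiv.Perm (Fin n)) {i j : ℕ} (hi : i < n) (hj : j < n)
    (hij : i ≠ j) : permVal n p i ≠ permVal n p j := by
  rw [permVal_eq n p hi, permVal_eq n p hj]
  intro h
  apply hij
  have := p.injective (Fin.val_injective h)
  exact congrArg Fin.val this

lemma parity_filter (ε : ℕ → Prop) [DecidablePred ε] (a : ℕ) :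
    ∀ b, a ≤ b →
      (Even ((Finset.Ico a b).filter (fun i => ¬(ε i ↔ ε (i+1)))).card ↔ (ε a ↔ ε b)) := by
  refine Nat.le_induction ?_ ?_
  · simp
  · intro b hab ih
    rw [Nat.Ico_succ_right_eq_insert_Ico hab, Finset.filter_insert]
    by_cases h : ¬(ε b ↔ ε (b+1))
    · rw [if_pos h, Finset.card_insert_of_notMem (by simp), Nat.even_add_one, Nat.not_even_iff_odd,
        ← Nat.not_even_iff_odd, ih]
      tauto
    · rw [if_neg h, ih]
      tauto

lemma numRuns_parity (n : ℕ) (hn : 2 ≤ n) (p : Equiv.Perm (Fin n)) :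
    Odd (numRuns n p) ↔
      ((permVal n p 0 < permVal n p 1) ↔ (permVal n p (n-2) < permVal n p (n-1))) := by
  have h1 : (Finset.Ico 1 (n-1)).filter (dirChange n p)
      = (Finset.Ico 1 (n-1)).filter
          (fun i => ¬((permVal n p (i-1) < permVal n p i) ↔
            (permVal n p (i+1-1) < permVal n p (i+1)))) := by
    apply Finset.filter_congr
    intro i hi
    simp only [Finset.mem_Ico] at hi
    have hi1 : i - 1 < n := by omega
    have hi2 : i < n := by omega
    have hi3 : i + 1 < n := by omega
    have d1 := permVal_ne n p hi1 hi2 (by omega)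
    have d2 := permVal_ne n p hi2 hi3 (by omega)
    have e1 : i + 1 - 1 = i := by omega
    rw [e1]
    unfold dirChange
    constructor
    · rintro (⟨h1, h2⟩ | ⟨h1, h2⟩) <;> omega
    · intro h; omega
  have hpar := parity_filter (fun i => permVal n p (i-1) < permVal n p i) 1 (n-1) (by omega)
  beta_reduce at hpar
  unfold numRuns
  rw [Nat.odd_add_one, Nat.not_odd_iff_even, h1, hpar]
  have e2 : n - 1 - 1 = n - 2 := by omega
  rw [e2]

lemma swap_flip (n : ℕ) (hn : 4 ≤ n) (p : Equiv.Perm (Fin n)) :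
    Odd (numRuns n (p * Equiv.swap (⟨n-2, by omega⟩ : Fin n) ⟨n-1, by omega⟩)) ↔
      ¬ Odd (numRuns n p) := by
  set a : Fin n := ⟨n-2, by omega⟩
  set b : Fin n := ⟨n-1, by omega⟩
  set q := p * Equiv.swap a b with hq
  have key : ∀ (i : ℕ) (h : i < n), i ≠ n-2 → i ≠ n-1 → permVal n q i = permVal n p i := by
    intro i h h2 h1
    rw [permVal_eq n q h, permVal_eq n p h, hq]
    simp only [Equiv.Perm.mul_apply]
    rw [Equiv.swap_apply_of_ne_of_ne (Fin.ne_of_val_ne h2) (Fin.ne_of_val_ne h1)]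
  have k0 : permVal n q 0 = permVal n p 0 := key 0 (by omega) (by omega) (by omega)
  have k1 : permVal n q 1 = permVal n p 1 := key 1 (by omega) (by omega) (by omega)
  have ka : permVal n q (n-2) = permVal n p (n-1) := by
    rw [permVal_eq n q (show n-2 < n by omega), permVal_eq n p (show n-1 < n by omega), hq]
    simp only [Equiv.Perm.mul_apply]
    have : (⟨n-2, by omega⟩ : Fin n) = a := rfl
    rw [this, Equiv.swap_apply_left]
  have kb : permVal n q (n-1) = permVal n p (n-2) := by
    rw [permVal_eq n q (show n-1 < n by omega), permVal_eq n p (show n-2 < n by omega), hq]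
    simp only [Equiv.Perm.mul_apply]
    have : (⟨n-1, by omega⟩ : Fin n) = b := rfl
    rw [this, Equiv.swap_apply_right]
  rw [numRuns_parity n (by omega) q, numRuns_parity n (by omega) p, k0, k1, ka, kb]
  have d := permVal_ne n p (show n-2 < n by omega) (show n-1 < n by omega) (by omega)
  omega

lemma odd_card_eq_even_card (n : ℕ) (hn : 4 ≤ n) :
    (Finset.univ.filter (fun p : Equiv.Perm (Fin n) => Odd (numRuns n p))).card =
      (Finset.univ.filter (fun p : Equiv.Perm (Fin n) => Even (numRuns n p))).card := by
  set s := Equiv.swap (⟨n-2, by omega⟩ : Fin n) ⟨n-1, by omega⟩ with hs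
  have hss : ∀ p : Equiv.Perm (Fin n), p * s * s = p := by
    intro p
    rw [mul_assoc, Equiv.swap_mul_self, mul_one]
  refine Finset.card_bij' (fun p _ => p * s) (fun p _ => p * s) ?_ ?_ ?_ ?_
  · intro p hp
    simp only [Finset.mem_filter, Finset.mem_univ, true_and] at hp ⊢
    rw [hs, Nat.not_odd_iff_even.symm, swap_flip n hn p, not_not]
    exact hp
  · intro p hp
    simp only [Finset.mem_filter, Finset.mem_univ, true_and] at hp ⊢
    rw [hs, swap_flip n hn p, Nat.not_odd_iff_even]
    exact hp
  · intro p _; exact hss p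
  · intro p _; exact hss p

lemma numRuns_lt (n : ℕ) (hn : 4 ≤ n) (p : Equiv.Perm (Fin n)) : numRuns n p < n := by
  unfold numRuns
  have := Finset.card_filter_le (Finset.Ico 1 (n-1)) (dirChange n p)
  rw [Nat.card_Ico] at this
  omega

/-- for `n ≥ 4`, as many permutations have an odd number of runs as an even
number of runs; equivalently, `(x+1)` divides `R_n(x)`. -/
theorem stmt2 (n : ℕ) (hn : 4 ≤ n) :
    (Finset.univ.filter (fun p : Equiv.Perm (Fin n) => Odd (numRuns n p))).card =
      (Finset.univ.filter (fun p : Equiv.Perm (Fin n) => Even (numRuns n p))).card ∧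
    (Polynomial.X + 1) ∣ Rpoly n := by
  have h1 := odd_card_eq_even_card n hn
  refine ⟨h1, ?_⟩
  rw [show (Polynomial.X + 1 : Polynomial ℤ) = Polynomial.X - Polynomial.C (-1) by simp,
    Polynomial.dvd_iff_isRoot]
  unfold Polynomial.IsRoot Rpoly
  rw [Polynomial.eval_finset_sum]
  simp only [Polynomial.eval_mul, Polynomial.eval_C, Polynomial.eval_pow, Polynomial.eval_X]
  have step1 : ∀ k ∈ Finset.range n, (R n k : ℤ) * (-1)^k
      = ∑ p ∈ Finset.univ.filter (fun p : Equiv.Perm (Fin n) => numRuns n p = k),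
          (-1 : ℤ)^(numRuns n p) := by
    intro k _
    rw [Finset.sum_congr rfl (fun p hp => by
      simp only [Finset.mem_filter] at hp
      rw [hp.2]), Finset.sum_const, R]
    simp [mul_comm]
  rw [Finset.sum_congr rfl step1,
    Finset.sum_fiberwise_of_maps_to (fun p _ => Finset.mem_range.2 (numRuns_lt n hn p))]
  rw [← Finset.sum_filter_add_sum_filter_not Finset.univ (fun p => Odd (numRuns n p))]
  have e1 : (∑ p ∈ Finset.univ.filter (fun p : Equiv.Perm (Fin n) => Odd (numRuns n p)),
      (-1:ℤ)^(numRuns n p)) =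
      -((Finset.univ.filter (fun p : Equiv.Perm (Fin n) => Odd (numRuns n p))).card : ℤ) := by
    rw [Finset.sum_congr rfl (fun p hp => ((Finset.mem_filter.1 hp).2.neg_one_pow)),
      Finset.sum_const]
    simp
  have e2 : (∑ p ∈ Finset.univ.filter (fun p : Equiv.Perm (Fin n) => ¬ Odd (numRuns n p)),
      (-1:ℤ)^(numRuns n p)) =
      ((Finset.univ.filter (fun p : Equiv.Perm (Fin n) => Even (numRuns n p))).card : ℤ) := by
    rw [Finset.filter_congr (fun p _ => by rw [Nat.not_odd_iff_even])]
    rw [Finset.sum_congr rfl (fun p hp => ((Finset.mem_filter.1 hp).2.neg_one_pow)),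
      Finset.sum_const]
    simp
  rw [e1, e2, h1]
  ring
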